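/- Let C be a cap in (Z/2Z)^n and p an element of its exclude set. If {x1,y1,z1} and {x2,y2,z2} are two distinct 3-element subsets of C with x1+y1+z1 = p = x2+y2+z2, then the two triples are disjoint. -/
import Mathlib


def IsCap {n : ℕ} (S : Set (Fin n → ZMod 2)) : Prop :=
  ∀ a ∈ S, ∀ b ∈ S, ∀ c ∈ S, ∀ d ∈ S,
    a ≠ b → a ≠ c → a ≠ d → b ≠ c → b ≠ d → c ≠ d → a + b + c + d ≠ 0

lemma add_self_zmod2 {n : ℕ} (v : Fin n → ZMod 2) : v + v = 0 := by
  funext i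
  simp only [Pi.add_apply, Pi.zero_apply]
  exact CharTwo.add_self_eq_zero _

/-- In a cap `C`, two distinct 3-element subsets with the same sum `p`
(a point of the exclude set) must be disjoint. -/
theorem disjoint_triples {n : ℕ} (C : Finset (Fin n → ZMod 2)) (hC : IsCap (C : Set (Fin n → ZMod 2)))
    (p : Fin n → ZMod 2) (t₁ t₂ : Finset (Fin n → ZMod 2))
    (ht₁ : t₁ ⊆ C) (ht₂ : t₂ ⊆ C) (hc₁ : t₁.card = 3) (hc₂ : t₂.card = 3)
    (hne : t₁ ≠ t₂) (hs₁ : t₁.sum id = p) (hs₂ : t₂.sum id = p) :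
    Disjoint t₁ t₂ := by
  rw [Finset.disjoint_left]
  intro x hx1 hx2
  apply hne
  have e1 : x + (t₁.erase x).sum id = p := by
    rw [← hs₁]; exact Finset.add_sum_erase t₁ id hx1
  have e2 : x + (t₂.erase x).sum id = p := by
    rw [← hs₂]; exact Finset.add_sum_erase t₂ id hx2
  have hsum : (t₁.erase x).sum id = (t₂.erase x).sum id :=
    add_left_cancel (e1.trans e2.symm)
  have hcard1 : (t₁.erase x).card = 2 := by
    rw [Finset.card_erase_of_mem hx1, hc₁]
  have hcard2 : (t₂.erase x).card = 2 := by
    rw [Finset.card_erase_of_mem hx2, hc₂]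
  obtain ⟨u, v, huv, h1⟩ := Finset.card_eq_two.mp hcard1
  obtain ⟨w, z, hwz, h2⟩ := Finset.card_eq_two.mp hcard2
  rw [h1, h2] at hsum
  have hsum' : u + v = w + z := by
    have := hsum
    rw [Finset.sum_pair huv, Finset.sum_pair hwz] at this
    simpa using this
  have key : t₁.erase x = t₂.erase x := by
    rw [h1, h2]
    by_cases huw : u = w
    · subst huw
      have : v = z := add_left_cancel hsum'
      rw [this]
    · by_cases huz : u = z
      · subst huz
        have : v = w := by
          have h : u + v = u + w := by rw [hsum']; ring
          exact add_left_cancel h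
        rw [this, Finset.pair_comm]
      · by_cases hvw : v = w
        · subst hvw
          exact absurd (add_left_cancel (show v + u = v + z by rw [add_comm v u, hsum'])) huz
        · by_cases hvz : v = z
          · subst hvz
            have h : v + u = v + w := by rw [add_comm v u, hsum']; ring
            exact absurd (add_left_cancel h) huw
          · exfalso
            have hu : u ∈ C := ht₁ (Finset.erase_subset _ _ (by rw [h1]; simp))
            have hv : v ∈ C := ht₁ (Finset.erase_subset _ _ (by rw [h1]; simp))
            have hw : w ∈ C := ht₂ (Finset.erase_subset _ _ (by rw [h2]; simp))
            have hz : z ∈ C := ht₂ (Finset.erase_subset _ _ (by rw [h2]; simp))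
            refine hC u hu v hv w hw z hz huv huw huz hvw hvz hwz ?_
            calc u + v + w + z = (u + v) + (w + z) := by ring
              _ = (w + z) + (w + z) := by rw [hsum']
              _ = 0 := add_self_zmod2 _
  calc t₁ = insert x (t₁.erase x) := (Finset.insert_erase hx1).symm
    _ = insert x (t₂.erase x) := by rw [key]
    _ = t₂ := Finset.insert_erase hx2
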